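/- Let W be a finite Weyl group with simple roots Δ, w ∈ W and α ∈ Δ with s_α w > w such that the positive root w^{-1}(α) is not simple. Then ℓ(w_Δ w^{-1} s_α w) < ℓ(w_Δ w^{-1} s_α) + ℓ(w); more precisely ℓ(w_Δ w^{-1} s_α w) = ℓ(w_Δ) − ℓ(s_{w^{-1}(α)}) and ℓ(w_Δ w^{-1} s_α) + ℓ(w) = ℓ(w_Δ) − 1. -/

import Mathlib

open Module

variable {V : Type} [AddCommGroup V] [Module ℝ V]

/-- A reduced crystallographic root system in the dual of `V`, with a chosen
positive system. -/
structure RootSystemData (V : Type) [AddCommGroup V] [Module ℝ V] where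
  roots : Finset (Module.Dual ℝ V)
  coroot : Module.Dual ℝ V → V
  pos : Finset (Module.Dual ℝ V)
  root_ne_zero : ∀ α ∈ roots, α ≠ 0
  coroot_self : ∀ α ∈ roots, α (coroot α) = 2
  reflection_mem : ∀ α ∈ roots, ∀ β ∈ roots, β - β (coroot α) • α ∈ roots
  crystallographic : ∀ α ∈ roots, ∀ β ∈ roots, ∃ n : ℤ, β (coroot α) = (n : ℝ)
  reduced : ∀ α ∈ roots, ∀ t : ℝ, t • α ∈ roots → t = 1 ∨ t = -1
  pos_subset : pos ⊆ roots
  pos_or_neg : ∀ α ∈ roots, α ∈ pos ∨ -α ∈ pos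
  pos_not_neg : ∀ α ∈ pos, -α ∉ pos
  pos_add : ∀ α ∈ pos, ∀ β ∈ pos, α + β ∈ roots → α + β ∈ pos

/-- The contragredient action of a linear automorphism of `V` on the dual space:
`(w β)(v) = β (w⁻¹ v)`. -/
noncomputable def dualAct (w : V ≃ₗ[ℝ] V) (β : Module.Dual ℝ V) : Module.Dual ℝ V :=
  β.comp w.symm.toLinearMap

namespace RootSystemData

variable (D : RootSystemData V)

/-- `ℓ(v) = Σ_{β ∈ Σ⁺} |⟨v, β⟩|`, the length of the translation by `v`. -/
noncomputable def coLen (v : V) : ℝ := ∑ β ∈ D.pos, |β v|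

/-- The reflection `s_α` acting on `V`, as a linear automorphism. -/
noncomputable def reflV (α : Module.Dual ℝ V) (h : α (D.coroot α) = 2) : V ≃ₗ[ℝ] V where
  toFun := fun v => v - α v • D.coroot α
  map_add' := by intro x y; simp only [map_add, add_smul]; abel
  map_smul' := by intro r x; simp only [map_smul, smul_eq_mul, RingHom.id_apply, smul_sub,
    smul_smul]
  invFun := fun v => v - α v • D.coroot α
  left_inv := by
    intro v
    simp only [map_sub, map_smul, smul_eq_mul, h]
    have : α v - α v * 2 = -(α v) := by ring
    rw [this, neg_smul, sub_neg_eq_add, sub_add_cancel]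
  right_inv := by
    intro v
    simp only [map_sub, map_smul, smul_eq_mul, h]
    have : α v - α v * 2 = -(α v) := by ring
    rw [this, neg_smul, sub_neg_eq_add, sub_add_cancel]

/-- The reflection attached to a root. -/
noncomputable def sRef (α : Module.Dual ℝ V) (h : α ∈ D.roots) : V ≃ₗ[ℝ] V :=
  D.reflV α (D.coroot_self α h)

/-- The Weyl group, as the subgroup of `GL(V)` generated by the reflections in the roots. -/
noncomputable def weylGroup : Subgroup (V ≃ₗ[ℝ] V) :=
  Subgroup.closure {e | ∃ α, ∃ h : α ∈ D.roots, e = D.sRef α h}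

open scoped Classical in
/-- The length of a Weyl group element: the number of positive roots made negative. -/
noncomputable def lenW (w : V ≃ₗ[ℝ] V) : ℕ :=
  (D.pos.filter fun β => dualAct w β ∉ D.pos).card

/-- The Bruhat order, via the standard characterization: the reflexive-transitive
closure of the relation `x < t x` whenever `t` is a reflection and `ℓ(x) < ℓ(t x)`. -/
def bruhatLE (x y : V ≃ₗ[ℝ] V) : Prop :=
  Relation.ReflTransGen
    (fun u v => D.lenW u < D.lenW v ∧ ∃ α, ∃ h : α ∈ D.roots, v = D.sRef α h * u) x y

/-- Strict Bruhat order. -/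
def bruhatLT (x y : V ≃ₗ[ℝ] V) : Prop := D.bruhatLE x y ∧ x ≠ y

/-- A simple (positive) root: a positive root which is not the sum of two positive roots. -/
def IsSimpleRoot (α : Module.Dual ℝ V) : Prop :=
  α ∈ D.pos ∧ ¬ ∃ β ∈ D.pos, ∃ γ ∈ D.pos, α = β + γ

/-- The set `Δ_w = {α ∈ Δ : w(α) > 0}`. -/
def DeltaW (w : V ≃ₗ[ℝ] V) : Set (Module.Dual ℝ V) :=
  {α | D.IsSimpleRoot α ∧ dualAct w α ∈ D.pos}

/-- The parabolic subgroup `W_Θ` generated by the reflections in the roots belonging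
to `Θ`. -/
noncomputable def parabolic (Θ : Set (Module.Dual ℝ V)) : Subgroup (V ≃ₗ[ℝ] V) :=
  Subgroup.closure {e | ∃ α, ∃ h : α ∈ D.roots, α ∈ Θ ∧ e = D.sRef α h}

/-- A dominant coweight. -/
def IsDominant (v : V) : Prop := ∀ β ∈ D.pos, 0 ≤ β v

end RootSystemData


section Aux

open Module Finset

namespace RootSystemData

open scoped Classical

variable {V : Type} [AddCommGroup V] [Module ℝ V] (D : RootSystemData V)

lemma dualAct_mul (u v : V ≃ₗ[ℝ] V) (β : Module.Dual ℝ V) :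
    dualAct (u * v) β = dualAct u (dualAct v β) := rfl

lemma dualAct_one (β : Module.Dual ℝ V) : dualAct 1 β = β := rfl

lemma dualAct_apply (w : V ≃ₗ[ℝ] V) (β : Module.Dual ℝ V) (x : V) :
    dualAct w β x = β (w.symm x) := rfl

lemma dualAct_add (w : V ≃ₗ[ℝ] V) (β γ : Module.Dual ℝ V) :
    dualAct w (β + γ) = dualAct w β + dualAct w γ := by
  ext x; simp [dualAct]

lemma dualAct_smul (w : V ≃ₗ[ℝ] V) (a : ℝ) (β : Module.Dual ℝ V) :
    dualAct w (a • β) = a • dualAct w β := by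
  ext x; simp [dualAct]

lemma dualAct_sub (w : V ≃ₗ[ℝ] V) (β γ : Module.Dual ℝ V) :
    dualAct w (β - γ) = dualAct w β - dualAct w γ := by
  ext x; simp [dualAct]

lemma dualAct_neg (w : V ≃ₗ[ℝ] V) (β : Module.Dual ℝ V) :
    dualAct w (-β) = - dualAct w β := by
  ext x; simp [dualAct]

lemma dualAct_inv_apply (w : V ≃ₗ[ℝ] V) (β : Module.Dual ℝ V) :
    dualAct w⁻¹ (dualAct w β) = β := by
  rw [← dualAct_mul, inv_mul_cancel, dualAct_one]

lemma dualAct_apply_inv (w : V ≃ₗ[ℝ] V) (β : Module.Dual ℝ V) :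
    dualAct w (dualAct w⁻¹ β) = β := by
  rw [← dualAct_mul, mul_inv_cancel, dualAct_one]

lemma dualAct_injective (w : V ≃ₗ[ℝ] V) : Function.Injective (dualAct w) := by
  intro x y h
  have := congrArg (dualAct w⁻¹) h
  rwa [dualAct_inv_apply, dualAct_inv_apply] at this

lemma dualAct_sRef (α : Module.Dual ℝ V) (h : α ∈ D.roots) (γ : Module.Dual ℝ V) :
    dualAct (D.sRef α h) γ = γ - γ (D.coroot α) • α := by
  ext x
  simp [dualAct, sRef, reflV, mul_comm]

lemma sRef_mul_self (α : Module.Dual ℝ V) (h : α ∈ D.roots) :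
    D.sRef α h * D.sRef α h = 1 := by
  apply LinearEquiv.ext
  intro v
  show D.sRef α h (D.sRef α h v) = v
  have hc := D.coroot_self α h
  simp only [sRef, reflV, LinearEquiv.coe_mk, LinearMap.coe_mk, AddHom.coe_mk,
    map_sub, map_smul, smul_eq_mul, hc]
  module

lemma sRef_inv (α : Module.Dual ℝ V) (h : α ∈ D.roots) :
    (D.sRef α h)⁻¹ = D.sRef α h := by
  exact inv_eq_of_mul_eq_one_left (D.sRef_mul_self α h)

lemma sRef_mem (α : Module.Dual ℝ V) (h : α ∈ D.roots) : D.sRef α h ∈ D.weylGroup :=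
  Subgroup.subset_closure ⟨α, h, rfl⟩

lemma neg_mem_roots {γ : Module.Dual ℝ V} (hγ : γ ∈ D.roots) : -γ ∈ D.roots := by
  have := D.reflection_mem γ hγ γ hγ
  rw [D.coroot_self γ hγ] at this
  have h2 : γ - (2:ℝ) • γ = -γ := by module
  rwa [h2] at this

lemma neg_pos_of_not_pos {γ : Module.Dual ℝ V} (hγ : γ ∈ D.roots) (h : γ ∉ D.pos) :
    -γ ∈ D.pos := (D.pos_or_neg γ hγ).resolve_left h

lemma root_mapsto {e : V ≃ₗ[ℝ] V} (he : e ∈ D.weylGroup) :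
    ∀ γ ∈ D.roots, dualAct e γ ∈ D.roots := by
  have main : ∀ e ∈ D.weylGroup,
      (∀ γ ∈ D.roots, dualAct e γ ∈ D.roots) ∧
      (∀ γ ∈ D.roots, dualAct e⁻¹ γ ∈ D.roots) := by
    intro e he
    induction he using Subgroup.closure_induction with
    | mem x hx =>
      obtain ⟨α, hα, rfl⟩ := hx
      refine ⟨?_, ?_⟩ <;> intro γ hγ
      · rw [D.dualAct_sRef]; exact D.reflection_mem α hα γ hγ
      · rw [D.sRef_inv, D.dualAct_sRef]; exact D.reflection_mem α hα γ hγ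
    | one => simp [dualAct_one]
    | mul x y hx hy ihx ihy =>
      refine ⟨fun γ hγ => ?_, fun γ hγ => ?_⟩
      · rw [dualAct_mul]; exact ihx.1 _ (ihy.1 γ hγ)
      · rw [mul_inv_rev, dualAct_mul]; exact ihy.2 _ (ihx.2 γ hγ)
    | inv x hx ihx =>
      refine ⟨ihx.2, fun γ hγ => ?_⟩
      rw [inv_inv]; exact ihx.1 γ hγ
  exact (main e he).1

lemma lenW_def (e : V ≃ₗ[ℝ] V) :
    D.lenW e = (D.pos.filter fun β => dualAct e β ∉ D.pos).card := by
  rw [lenW]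

lemma lenW_le_card (e : V ≃ₗ[ℝ] V) : D.lenW e ≤ D.pos.card := by
  rw [lenW_def]; exact Finset.card_filter_le _ _

lemma lenW_congr {x y : V ≃ₗ[ℝ] V} (h : ∀ β ∈ D.pos, dualAct x β = dualAct y β) :
    D.lenW x = D.lenW y := by
  rw [lenW_def, lenW_def]
  congr 1
  apply Finset.filter_congr
  intro β hβ
  rw [h β hβ]

lemma lenW_long {wD : V ≃ₗ[ℝ] V} (hwDlong : ∀ β ∈ D.pos, dualAct wD β ∉ D.pos) :
    D.lenW wD = D.pos.card := by
  rw [lenW_def, Finset.filter_true_of_mem hwDlong]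

lemma lenW_long_mul {wD : V ≃ₗ[ℝ] V} (hwD : wD ∈ D.weylGroup)
    (hwDlong : ∀ β ∈ D.pos, dualAct wD β ∉ D.pos)
    {x : V ≃ₗ[ℝ] V} (hx : x ∈ D.weylGroup) :
    D.lenW (wD * x) = D.pos.card - D.lenW x := by
  have key : ∀ β ∈ D.pos, (dualAct (wD * x) β ∉ D.pos ↔ dualAct x β ∈ D.pos) := by
    intro β hβ
    rw [dualAct_mul]
    constructor
    · intro h
      by_contra hq
      have hroot : dualAct x β ∈ D.roots := D.root_mapsto hx β (D.pos_subset hβ)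
      have hneg : -dualAct x β ∈ D.pos := D.neg_pos_of_not_pos hroot hq
      have h1 : dualAct wD (-dualAct x β) ∉ D.pos := hwDlong _ hneg
      rw [dualAct_neg] at h1
      have hroot2 : dualAct wD (dualAct x β) ∈ D.roots :=
        D.root_mapsto hwD _ hroot
      have := (D.pos_or_neg _ hroot2).resolve_right h1
      exact h this
    · intro h
      exact hwDlong _ h
  rw [lenW_def, Finset.filter_congr key]
  have := Finset.card_filter_add_card_filter_not
    (s := D.pos) (p := fun β => dualAct x β ∈ D.pos)
  have hx' : D.lenW x = (D.pos.filter fun β => ¬ (dualAct x β ∈ D.pos)).card := lenW_def D x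
  omega

lemma lenW_inv {e : V ≃ₗ[ℝ] V} (he : e ∈ D.weylGroup) : D.lenW e⁻¹ = D.lenW e := by
  rw [lenW_def, lenW_def]
  apply Finset.card_bij' (i := fun β _ => -dualAct e⁻¹ β) (j := fun β _ => -dualAct e β)
  · intro β hβ
    simp only [Finset.mem_filter] at hβ ⊢
    have hroot : dualAct e⁻¹ β ∈ D.roots :=
      D.root_mapsto (inv_mem he) β (D.pos_subset hβ.1)
    refine ⟨D.neg_pos_of_not_pos hroot hβ.2, ?_⟩
    rw [dualAct_neg, dualAct_apply_inv]
    exact D.pos_not_neg β hβ.1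
  · intro β hβ
    simp only [Finset.mem_filter] at hβ ⊢
    have hroot : dualAct e β ∈ D.roots :=
      D.root_mapsto he β (D.pos_subset hβ.1)
    refine ⟨D.neg_pos_of_not_pos hroot hβ.2, ?_⟩
    rw [dualAct_neg, dualAct_inv_apply]
    exact D.pos_not_neg β hβ.1
  · intro β hβ
    rw [dualAct_neg, dualAct_apply_inv, neg_neg]
  · intro β hβ
    rw [dualAct_neg, dualAct_inv_apply, neg_neg]

/-- Chebyshev-like sequence: `M^k = p_k M - p_{k-1}` for `M` with trace `t`, det `1`. -/
noncomputable def pseq (t : ℝ) : ℕ → ℝ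
  | 0 => 0
  | 1 => 1
  | (k+2) => t * pseq t (k+1) - pseq t k

lemma pseq_zero (t : ℝ) : pseq t 0 = 0 := rfl
lemma pseq_one (t : ℝ) : pseq t 1 = 1 := rfl
lemma pseq_two (t : ℝ) (k : ℕ) : pseq t (k+2) = t * pseq t (k+1) - pseq t k := rfl

lemma pseq_growth {t : ℝ} (ht : 2 ≤ |t|) :
    ∀ k : ℕ, (k:ℝ) ≤ |pseq t k| ∧ |pseq t k| + 1 ≤ |pseq t (k+1)| := by
  intro k
  induction k with
  | zero => simp [pseq_zero, pseq_one]
  | succ k ih =>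
    obtain ⟨h1, h2⟩ := ih
    refine ⟨by push_cast; linarith, ?_⟩
    have hstep : |t * pseq t (k+1)| - |pseq t k| ≤ |pseq t (k+2)| := by
      rw [pseq_two]
      have := abs_sub_abs_le_abs_sub (t * pseq t (k+1)) (pseq t k)
      linarith
    rw [abs_mul] at hstep
    have h0 : (0:ℝ) ≤ |pseq t (k+1)| := abs_nonneg _
    nlinarith

lemma indep_of_roots {β γ : Module.Dual ℝ V} (hβ : β ∈ D.roots) (hγ : γ ∈ D.roots)
    (h1 : γ ≠ β) (h2 : γ ≠ -β) :
    ∀ a b : ℝ, a • β + b • γ = 0 → a = 0 ∧ b = 0 := by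
  intro a b hab
  by_cases hb : b = 0
  · subst hb
    rw [zero_smul, add_zero] at hab
    rcases smul_eq_zero.mp hab with h | h
    · exact ⟨h, rfl⟩
    · exact absurd h (D.root_ne_zero β hβ)
  · exfalso
    have hγeq : γ = (-(a/b)) • β := by
      rw [eq_comm, ← sub_eq_zero]
      have hkey : (-(a/b)) • β - γ = (-(1/b)) • (a • β + b • γ) := by
        match_scalars
        · field_simp
        · field_simp
      rw [hkey, hab, smul_zero]
    have hmem : (-(a/b)) • β ∈ D.roots := by rw [← hγeq]; exact hγ
    rcases D.reduced β hβ _ hmem with h | h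
    · rw [h, one_smul] at hγeq; exact h1 hγeq
    · rw [h] at hγeq
      rw [neg_one_smul ℝ β] at hγeq
      exact h2 hγeq

lemma rank2 {β γ : Module.Dual ℝ V} (hβ : β ∈ D.roots) (hγ : γ ∈ D.roots)
    (h1 : γ ≠ β) (h2 : γ ≠ -β) :
    (γ (D.coroot β) = 0 ∧ β (D.coroot γ) = 0) ∨
    (1 ≤ γ (D.coroot β) * β (D.coroot γ) ∧ γ (D.coroot β) * β (D.coroot γ) ≤ 3) := by
  set n : ℝ := γ (D.coroot β) with hn
  set m : ℝ := β (D.coroot γ) with hm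
  set t : ℝ := n * m - 2 with hT
  set f : Module.Dual ℝ V → Module.Dual ℝ V :=
    fun x => dualAct (D.sRef β hβ * D.sRef γ hγ) x with hf
  have hfβ : f β = (n*m-1) • β - m • γ := by
    show dualAct (D.sRef β hβ * D.sRef γ hγ) β = _
    rw [dualAct_mul, D.dualAct_sRef, D.dualAct_sRef]
    simp only [LinearMap.sub_apply, LinearMap.smul_apply, smul_eq_mul,
      D.coroot_self β hβ, ← hn, ← hm]
    module
  have hfγ : f γ = n • β - γ := by
    show dualAct (D.sRef β hβ * D.sRef γ hγ) γ = _
    rw [dualAct_mul, D.dualAct_sRef, D.dualAct_sRef]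
    simp only [LinearMap.sub_apply, LinearMap.smul_apply, smul_eq_mul,
      D.coroot_self γ hγ, ← hn, ← hm]
    module
  have flin : ∀ (a b : ℝ) (x y : Module.Dual ℝ V), f (a • x - b • y) = a • f x - b • f y := by
    intro a b x y
    show dualAct _ _ = _
    rw [dualAct_sub, dualAct_smul, dualAct_smul]
  have froot : ∀ x ∈ D.roots, f x ∈ D.roots := fun x hx =>
    D.root_mapsto (mul_mem (D.sRef_mem β hβ) (D.sRef_mem γ hγ)) x hx
  have finj : Function.Injective f := dualAct_injective _
  have horb : ∀ k : ℕ, f^[k] β ∈ D.roots ∧ f^[k] γ ∈ D.roots := by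
    intro k
    induction k with
    | zero => exact ⟨hβ, hγ⟩
    | succ k ih =>
      rw [Function.iterate_succ_apply', Function.iterate_succ_apply']
      exact ⟨froot _ ih.1, froot _ ih.2⟩
  obtain ⟨N, hN1, hNβ, hNγ⟩ : ∃ N, 1 ≤ N ∧ f^[N] β = β ∧ f^[N] γ = γ := by
    have : ∃ k l : ℕ, k ≠ l ∧ f^[k] β = f^[l] β ∧ f^[k] γ = f^[l] γ := by
      obtain ⟨k, l, hkl, he⟩ := Finite.exists_ne_map_eq_of_infinite
        (fun k : ℕ => ((⟨f^[k] β, (horb k).1⟩ : {x // x ∈ D.roots}),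
          (⟨f^[k] γ, (horb k).2⟩ : {x // x ∈ D.roots})))
      refine ⟨k, l, hkl, ?_, ?_⟩
      · exact congrArg (fun p => (p.1 : Module.Dual ℝ V)) he
      · exact congrArg (fun p => (p.2 : Module.Dual ℝ V)) he
    obtain ⟨k, l, hkl, heβ, heγ⟩ := this
    rcases hkl.lt_or_gt with h | h
    · refine ⟨l - k, by omega, ?_, ?_⟩
      · have : f^[k] (f^[l-k] β) = f^[k] β := by
          rw [← Function.iterate_add_apply]
          rw [show k + (l - k) = l by omega, heβ]
        exact (finj.iterate k) this
      · have : f^[k] (f^[l-k] γ) = f^[k] γ := by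
          rw [← Function.iterate_add_apply]
          rw [show k + (l - k) = l by omega, heγ]
        exact (finj.iterate k) this
    · refine ⟨k - l, by omega, ?_, ?_⟩
      · have : f^[l] (f^[k-l] β) = f^[l] β := by
          rw [← Function.iterate_add_apply]
          rw [show l + (k - l) = k by omega, ← heβ]
        exact (finj.iterate l) this
      · have : f^[l] (f^[k-l] γ) = f^[l] γ := by
          rw [← Function.iterate_add_apply]
          rw [show l + (k - l) = k by omega, ← heγ]
        exact (finj.iterate l) this
  have hcoef : ∀ k : ℕ,
      f^[k+1] β = (pseq t (k+1) * (n*m-1) - pseq t k) • β - (pseq t (k+1) * m) • γ ∧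
      f^[k+1] γ = (pseq t (k+1) * n) • β - (pseq t (k+1) + pseq t k) • γ := by
    intro k
    induction k with
    | zero =>
      rw [Function.iterate_one]
      constructor
      · rw [hfβ, pseq_zero, pseq_one]; module
      · rw [hfγ, pseq_zero, pseq_one]; module
    | succ k ih =>
      have e1 : f^[k+1+1] β = f (f^[k+1] β) := Function.iterate_succ_apply' f (k+1) β
      have e2 : f^[k+1+1] γ = f (f^[k+1] γ) := Function.iterate_succ_apply' f (k+1) γ
      have hrec : pseq t (k+2) = t * pseq t (k+1) - pseq t k := pseq_two t k
      constructor
      · rw [e1, ih.1, flin, hfβ, hfγ, hrec, hT]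
        module
      · rw [e2, ih.2, flin, hfβ, hfγ, hrec, hT]
        module
  obtain ⟨K, rfl⟩ : ∃ K, N = K + 1 := ⟨N - 1, by omega⟩
  have hcβ := (hcoef K).1
  have hcγ := (hcoef K).2
  rw [hNβ] at hcβ
  rw [hNγ] at hcγ
  have hz1 : (pseq t (K+1) * (n*m-1) - pseq t K - 1) • β + (-(pseq t (K+1) * m)) • γ = 0 := by
    linear_combination (norm := module) -hcβ
  have hz2 : (pseq t (K+1) * n) • β + (-(pseq t (K+1) + pseq t K) - 1) • γ = 0 := by
    linear_combination (norm := module) -hcγ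
  have hi1 := D.indep_of_roots hβ hγ h1 h2 _ _ hz1
  have hi2 := D.indep_of_roots hβ hγ h1 h2 _ _ hz2
  by_cases hp : pseq t (K+1) = 0
  · right
    have htlt : |t| < 2 := by
      by_contra hge
      push_neg at hge
      have := (pseq_growth hge (K+1)).1
      rw [hp] at this
      simp only [abs_zero] at this
      have hc : (0:ℝ) < ((K+1 : ℕ) : ℝ) := by exact_mod_cast Nat.succ_pos K
      linarith
    rw [abs_lt] at htlt
    obtain ⟨a, ha⟩ := D.crystallographic β hβ γ hγ
    obtain ⟨b, hb⟩ := D.crystallographic γ hγ β hβ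
    rw [← hn] at ha
    rw [← hm] at hb
    have hprod : (0:ℝ) < (a : ℝ) * b ∧ ((a:ℝ) * b) < 4 := by
      have hT2 : t = (a:ℝ) * b - 2 := by rw [hT, ha, hb]
      rw [hT2] at htlt
      exact ⟨by linarith [htlt.1], by linarith [htlt.2]⟩
    have hab : (1:ℤ) ≤ a * b ∧ a * b ≤ 3 := by
      have h1 : (0:ℝ) < ((a*b : ℤ) : ℝ) := by push_cast; exact hprod.1
      have h2 : ((a*b : ℤ) : ℝ) < 4 := by push_cast; exact hprod.2
      have h3 : (0:ℤ) < a*b := by exact_mod_cast h1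
      have h4 : (a*b : ℤ) < 4 := by exact_mod_cast h2
      omega
    constructor
    · rw [ha, hb]
      exact_mod_cast hab.1
    · rw [ha, hb]
      exact_mod_cast hab.2
  · left
    have hn0 : n = 0 := by
      rcases mul_eq_zero.mp hi2.1 with h | h
      · exact absurd h hp
      · exact h
    have hm0 : m = 0 := by
      have := hi1.2
      rw [neg_eq_zero] at this
      rcases mul_eq_zero.mp this with h | h
      · exact absurd h hp
      · exact h
    exact ⟨hn0, hm0⟩

lemma aux_step {α γ : Module.Dual ℝ V} (hα : α ∈ D.roots) (hsimp : D.IsSimpleRoot α)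
    (hγp : γ ∈ D.pos) (h1 : γ ≠ α) (h2 : γ ≠ -α)
    {k : ℤ} (hk : γ (D.coroot α) = (k:ℝ)) (hk2 : 2 ≤ k) :
    γ - α ∈ D.pos ∧ k ≤ 3 := by
  have hγr := D.pos_subset hγp
  obtain ⟨j, hj⟩ := D.crystallographic γ hγr α hα
  have hrk := D.rank2 hα hγr h1 h2
  rw [hk, hj] at hrk
  have hkj : j = 1 ∧ k ≤ 3 := by
    rcases hrk with ⟨h0, _⟩ | ⟨hge, hle⟩
    · exfalso
      have : k = 0 := by exact_mod_cast h0
      omega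
    · have hge' : (1:ℤ) ≤ k * j := by exact_mod_cast hge
      have hle' : k * j ≤ 3 := by exact_mod_cast hle
      have hj1 : 1 ≤ j := by nlinarith
      have hj2 : j ≤ 1 := by nlinarith
      have : j = 1 := le_antisymm hj2 hj1
      subst this
      omega
  have hroot2 : α - γ ∈ D.roots := by
    have := D.reflection_mem γ hγr α hα
    rw [hj, hkj.1] at this
    have h' : α - ((1:ℤ):ℝ) • γ = α - γ := by push_cast; module
    rwa [h'] at this
  by_cases hp : α - γ ∈ D.pos
  · exact absurd ⟨α - γ, hp, γ, hγp, by abel⟩ hsimp.2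
  · have := D.neg_pos_of_not_pos hroot2 hp
    rw [neg_sub] at this
    exact ⟨this, hkj.2⟩

lemma aux_neg {α γ : Module.Dual ℝ V} (hα : α ∈ D.roots) (hαp : α ∈ D.pos)
    (hγp : γ ∈ D.pos) (h1 : γ ≠ α) (h2 : γ ≠ -α)
    {k : ℤ} (hk : γ (D.coroot α) = (k:ℝ)) (hk2 : k ≤ -1) :
    γ + α ∈ D.pos ∧ -3 ≤ k := by
  have hγr := D.pos_subset hγp
  by_cases hk1 : k = -1
  · have hroot : γ + α ∈ D.roots := by
      have := D.reflection_mem α hα γ hγr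
      rw [hk, hk1] at this
      have h' : γ - ((-1:ℤ):ℝ) • α = γ + α := by push_cast; module
      rwa [h'] at this
    exact ⟨D.pos_add γ hγp α hαp hroot, by omega⟩
  · obtain ⟨j, hj⟩ := D.crystallographic γ hγr α hα
    have hrk := D.rank2 hα hγr h1 h2
    rw [hk, hj] at hrk
    have hkj : j = -1 ∧ -3 ≤ k := by
      rcases hrk with ⟨h0, _⟩ | ⟨hge, hle⟩
      · exfalso
        have : k = 0 := by exact_mod_cast h0
        omega
      · have hge' : (1:ℤ) ≤ k * j := by exact_mod_cast hge
        have hle' : k * j ≤ 3 := by exact_mod_cast hle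
        have hkneg : k ≤ -2 := by omega
        have hj1 : j ≤ -1 := by nlinarith
        have hj2 : -1 ≤ j := by nlinarith
        have : j = -1 := le_antisymm hj1 hj2
        subst this
        constructor
        · rfl
        · nlinarith
    have hroot2 : α + γ ∈ D.roots := by
      have := D.reflection_mem γ hγr α hα
      rw [hj, hkj.1] at this
      have h' : α - ((-1:ℤ):ℝ) • γ = α + γ := by push_cast; module
      rwa [h'] at this
    have := D.pos_add α hαp γ hγp hroot2
    rw [add_comm] at this
    exact ⟨this, hkj.2⟩

lemma simple_perm {α : Module.Dual ℝ V} (hα : α ∈ D.roots) (hs : D.IsSimpleRoot α)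
    {γ : Module.Dual ℝ V} (hγ : γ ∈ D.pos) (hne : γ ≠ α) :
    dualAct (D.sRef α hα) γ ∈ D.pos := by
  have hαpos : α ∈ D.pos := hs.1
  have hγr : γ ∈ D.roots := D.pos_subset hγ
  have hneneg : γ ≠ -α := fun h => D.pos_not_neg α hαpos (h ▸ hγ)
  by_contra hnot
  rw [D.dualAct_sRef] at hnot
  obtain ⟨k, hk⟩ := D.crystallographic α hα γ hγr
  rw [hk] at hnot
  have hroot : γ - (k:ℝ) • α ∈ D.roots := by
    have := D.reflection_mem α hα γ hγr
    rwa [hk] at this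
  have hδpos : (k:ℝ) • α - γ ∈ D.pos := by
    have := D.neg_pos_of_not_pos hroot hnot
    rwa [neg_sub] at this
  set δ : Module.Dual ℝ V := (k:ℝ) • α - γ with hδ
  have hδr : δ ∈ D.roots := D.pos_subset hδpos
  have hδcor : δ (D.coroot α) = (k:ℝ) := by
    rw [hδ]
    simp only [LinearMap.sub_apply, LinearMap.smul_apply, smul_eq_mul,
      D.coroot_self α hα, hk]
    ring
  have hδne1 : δ ≠ α := by
    intro h
    rw [hδ] at h
    have hγeq : γ = ((k:ℝ) - 1) • α := by
      linear_combination (norm := module) -h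
    have hmem : ((k:ℝ) - 1) • α ∈ D.roots := hγeq ▸ hγr
    rcases D.reduced α hα _ hmem with h' | h'
    · rw [h', one_smul] at hγeq; exact hne hγeq
    · rw [h', neg_one_smul ℝ α] at hγeq; exact hneneg hγeq
  have hδne2 : δ ≠ -α := by
    intro h
    rw [hδ] at h
    have hγeq : γ = ((k:ℝ) + 1) • α := by
      linear_combination (norm := module) -h
    have hmem : ((k:ℝ) + 1) • α ∈ D.roots := hγeq ▸ hγr
    rcases D.reduced α hα _ hmem with h' | h'
    · rw [h', one_smul] at hγeq; exact hne hγeq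
    · rw [h', neg_one_smul ℝ α] at hγeq; exact hneneg hγeq
  rcases lt_trichotomy k 0 with hkneg | hk0 | hkpos
  · have hkle : k ≤ -1 := by omega
    obtain ⟨hγα, hγ3⟩ := D.aux_neg hα hαpos hγ hne hneneg hk hkle
    obtain ⟨hδα, _⟩ := D.aux_neg hα hαpos hδpos hδne1 hδne2 hδcor hkle
    interval_cases k
    · have hsum : (γ + α) + (δ + α) = -α := by rw [hδ]; push_cast; module
      have hmem : -α ∈ D.roots := D.neg_mem_roots hα
      have := D.pos_add _ hγα _ hδα (by rw [hsum]; exact hmem)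
      rw [hsum] at this
      exact D.pos_not_neg α hαpos this
    · have hsum : δ + α = -(γ + α) := by rw [hδ]; push_cast; module
      rw [hsum] at hδα
      exact D.pos_not_neg _ hγα hδα
    · have hsum : δ + α = -γ := by rw [hδ]; push_cast; module
      rw [hsum] at hδα
      exact D.pos_not_neg _ hγ hδα
  · subst hk0
    have hd : δ = -γ := by rw [hδ]; push_cast; module
    rw [hd] at hδpos
    exact D.pos_not_neg _ hγ hδpos
  · rcases eq_or_lt_of_le (show (1:ℤ) ≤ k from hkpos) with hk1 | hk2
    · exact hs.2 ⟨γ, hγ, δ, hδpos, by rw [hδ, ← hk1]; push_cast; module⟩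
    · have hk2' : 2 ≤ k := by omega
      obtain ⟨hγα, hk3⟩ := D.aux_step hα hs hγ hne hneneg hk hk2'
      obtain ⟨hδα, _⟩ := D.aux_step hα hs hδpos hδne1 hδne2 hδcor hk2'
      interval_cases k
      · have hsum : δ - α = -(γ - α) := by rw [hδ]; push_cast; module
        rw [hsum] at hδα
        exact D.pos_not_neg _ hγα hδα
      · have hsum : (γ - α) + (δ - α) = α := by rw [hδ]; push_cast; module
        exact hs.2 ⟨γ - α, hγα, δ - α, hδα, hsum.symm⟩

lemma coroot_values_eq {β : Module.Dual ℝ V} (hβ : β ∈ D.roots) (c c' : V)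
    (hc2 : β c = 2) (hc2' : β c' = 2)
    (hrc : ∀ γ ∈ D.roots, γ - γ c • β ∈ D.roots)
    (hrc' : ∀ γ ∈ D.roots, γ - γ c' • β ∈ D.roots) :
    ∀ γ ∈ D.roots, γ c = γ c' := by
  intro γ hγ
  by_contra hne
  have hd0 : γ c' - γ c ≠ 0 := sub_ne_zero.mpr (Ne.symm hne)
  set d : ℝ := γ c' - γ c with hd
  have key : ∀ k : ℕ, γ + ((k:ℝ) * d) • β ∈ D.roots := by
    intro k
    induction k with
    | zero => simpa using hγ
    | succ k ih =>
      have h1 := hrc' _ ih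
      have h2 := hrc _ h1
      have he : (γ + ((k:ℝ) * d) • β - (γ + ((k:ℝ) * d) • β) c' • β) -
          (γ + ((k:ℝ) * d) • β - (γ + ((k:ℝ) * d) • β) c' • β) c • β
          = γ + (((k:ℝ) + 1) * d) • β := by
        simp only [LinearMap.add_apply, LinearMap.sub_apply, LinearMap.smul_apply,
          smul_eq_mul, hc2, hc2']
        match_scalars <;> (try rw [hd]) <;> ring
      rw [he] at h2
      have hcast : (((k+1 : ℕ)):ℝ) = (k:ℝ) + 1 := by push_cast; ring
      rw [hcast]
      exact h2
  have hinj : Function.Injective (fun k : ℕ => γ + ((k:ℝ) * d) • β) := by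
    intro a b hab
    simp only [add_right_inj] at hab
    have hβ0 : β ≠ 0 := D.root_ne_zero β hβ
    have hscal : (a:ℝ) * d = (b:ℝ) * d := smul_left_injective ℝ hβ0 hab
    have : (a:ℝ) = (b:ℝ) := mul_right_cancel₀ hd0 hscal
    exact_mod_cast this
  have hinf : (↑D.roots : Set (Module.Dual ℝ V)).Infinite :=
    Set.infinite_of_injective_forall_mem hinj
      (fun k => Finset.mem_coe.mpr (key k))
  exact hinf D.roots.finite_toSet

lemma lenW_simple_mul {α : Module.Dual ℝ V} (hα : α ∈ D.roots) (hs : D.IsSimpleRoot α)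
    {w : V ≃ₗ[ℝ] V} (hw : w ∈ D.weylGroup) (hpos : dualAct w⁻¹ α ∈ D.pos) :
    D.lenW (D.sRef α hα * w) = D.lenW w + 1 := by
  set β₀ := dualAct w⁻¹ α with hβ₀
  have hw0 : dualAct w β₀ = α := dualAct_apply_inv w α
  have key : ∀ β ∈ D.pos,
      (dualAct (D.sRef α hα * w) β ∉ D.pos ↔ (dualAct w β ∉ D.pos ∨ β = β₀)) := by
    intro β hβ
    rw [dualAct_mul]
    by_cases hb : β = β₀
    · subst hb
      rw [hw0, D.dualAct_sRef, D.coroot_self α hα]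
      have h2 : α - (2:ℝ) • α = -α := by module
      rw [h2]
      exact ⟨fun _ => Or.inr rfl, fun _ => D.pos_not_neg α hs.1⟩
    · have hβr := D.pos_subset hβ
      have hγr : dualAct w β ∈ D.roots := D.root_mapsto hw β hβr
      have hγnea : dualAct w β ≠ α := by
        intro h
        apply hb
        rw [hβ₀, ← h, dualAct_inv_apply]
      constructor
      · intro h
        left
        by_contra hq
        exact h (D.simple_perm hα hs (by simpa using hq) hγnea)
      · rintro (h | h)
        · have hneg : -dualAct w β ∈ D.pos := D.neg_pos_of_not_pos hγr h
          have hnea2 : -dualAct w β ≠ α := by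
            intro h'
            have hwb : dualAct w β = -α := by rw [← h', neg_neg]
            have hββ : β = -β₀ := by
              rw [hβ₀, ← dualAct_neg, ← hwb, dualAct_inv_apply]
            rw [hββ] at hβ
            exact D.pos_not_neg β₀ hpos hβ
          have hper := D.simple_perm hα hs hneg hnea2
          rw [D.dualAct_sRef] at hper ⊢
          intro hcon
          apply D.pos_not_neg _ hcon
          have hrewrite : -(dualAct w β - (dualAct w β) (D.coroot α) • α)
              = -dualAct w β - (-dualAct w β) (D.coroot α) • α := by
            simp only [LinearMap.neg_apply]
            module
          rw [hrewrite]
          exact hper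
        · exact absurd h hb
  have hsplit : (D.pos.filter fun β => dualAct w β ∉ D.pos ∨ β = β₀)
      = insert β₀ (D.pos.filter fun β => dualAct w β ∉ D.pos) := by
    ext x
    simp only [Finset.mem_filter, Finset.mem_insert]
    constructor
    · rintro ⟨hx, h | h⟩
      · exact Or.inr ⟨hx, h⟩
      · exact Or.inl h
    · rintro (rfl | ⟨hx, h⟩)
      · exact ⟨hpos, Or.inr rfl⟩
      · exact ⟨hx, Or.inl h⟩
  have hnotmem : β₀ ∉ D.pos.filter fun β => dualAct w β ∉ D.pos := by
    simp only [Finset.mem_filter, not_and, not_not]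
    intro _
    rw [hw0]
    exact hs.1
  rw [lenW_def, Finset.filter_congr key, hsplit, Finset.card_insert_of_notMem hnotmem,
    ← lenW_def]

lemma two_le_lenW_sRef {β : Module.Dual ℝ V} (hβp : β ∈ D.pos) (hβ : β ∈ D.roots)
    (hns : ¬ D.IsSimpleRoot β) :
    2 ≤ D.lenW (D.sRef β hβ) := by
  have hdec : ∃ γ ∈ D.pos, ∃ δ ∈ D.pos, β = γ + δ := by
    by_contra h
    exact hns ⟨hβp, h⟩
  obtain ⟨γ, hγ, δ, hδ, hsum⟩ := hdec
  subst hsum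
  have hval : γ (D.coroot (γ + δ)) + δ (D.coroot (γ + δ)) = 2 := by
    have h3 := D.coroot_self (γ + δ) hβ
    simp only [LinearMap.add_apply] at h3
    linarith
  have hflipβ : dualAct (D.sRef (γ + δ) hβ) (γ + δ) ∉ D.pos := by
    rw [D.dualAct_sRef, D.coroot_self (γ + δ) hβ]
    have h2 : (γ + δ) - (2:ℝ) • (γ + δ) = -(γ + δ) := by module
    rw [h2]
    exact D.pos_not_neg _ hβp
  have hflip : dualAct (D.sRef (γ + δ) hβ) γ ∉ D.pos ∨
      dualAct (D.sRef (γ + δ) hβ) δ ∉ D.pos := by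
    by_contra h
    push_neg at h
    obtain ⟨h1, h2⟩ := h
    have hsum2 : dualAct (D.sRef (γ + δ) hβ) γ + dualAct (D.sRef (γ + δ) hβ) δ
        = -(γ + δ) := by
      rw [D.dualAct_sRef, D.dualAct_sRef]
      match_scalars <;> linarith [hval]
    have hmem : -(γ + δ) ∈ D.roots := D.neg_mem_roots hβ
    have := D.pos_add _ h1 _ h2 (by rw [hsum2]; exact hmem)
    rw [hsum2] at this
    exact D.pos_not_neg _ hβp this
  have main : ∀ x, x ∈ D.pos → x ≠ γ + δ → dualAct (D.sRef (γ + δ) hβ) x ∉ D.pos →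
      2 ≤ D.lenW (D.sRef (γ + δ) hβ) := by
    intro x hxp hxne hxflip
    have hsub : ({γ + δ, x} : Finset (Module.Dual ℝ V)) ⊆
        D.pos.filter fun y => dualAct (D.sRef (γ + δ) hβ) y ∉ D.pos := by
      intro y hy
      rcases Finset.mem_insert.mp hy with rfl | hy'
      · exact Finset.mem_filter.mpr ⟨hβp, hflipβ⟩
      · rw [Finset.mem_singleton] at hy'
        subst hy'
        exact Finset.mem_filter.mpr ⟨hxp, hxflip⟩
    have hcard : ({γ + δ, x} : Finset (Module.Dual ℝ V)).card = 2 := by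
      rw [Finset.card_insert_of_notMem (by simpa using (Ne.symm hxne)), Finset.card_singleton]
    rw [lenW_def]
    calc 2 = ({γ + δ, x} : Finset (Module.Dual ℝ V)).card := hcard.symm
    _ ≤ _ := Finset.card_le_card hsub
  rcases hflip with h | h
  · refine main γ hγ ?_ h
    intro hcon
    exact D.root_ne_zero δ (D.pos_subset hδ) (left_eq_add.mp hcon)
  · refine main δ hδ ?_ h
    intro hcon
    exact D.root_ne_zero γ (D.pos_subset hγ) (right_eq_add.mp hcon)

end RootSystemData

end Aux

open RootSystemData in
/-- If `s_α w > w` and the positive root `w⁻¹(α)` is not simple,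
then `ℓ(w_Δ w⁻¹ s_α w) = ℓ(w_Δ) − ℓ(s_{w⁻¹(α)})`, `ℓ(w_Δ w⁻¹ s_α) + ℓ(w) = ℓ(w_Δ) − 1`
and in particular `ℓ(w_Δ w⁻¹ s_α w) < ℓ(w_Δ w⁻¹ s_α) + ℓ(w)`. -/
theorem length_defect (D : RootSystemData V)
    (wD : V ≃ₗ[ℝ] V) (hwD : wD ∈ D.weylGroup)
    (hwDlong : ∀ β ∈ D.pos, dualAct wD β ∉ D.pos)
    (w : V ≃ₗ[ℝ] V) (hw : w ∈ D.weylGroup)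
    (α : Module.Dual ℝ V) (hα : α ∈ D.roots) (hαs : D.IsSimpleRoot α)
    (hlt : D.bruhatLT w (D.sRef α hα * w))
    (hpos : dualAct w⁻¹ α ∈ D.pos) (hns : ¬ D.IsSimpleRoot (dualAct w⁻¹ α)) :
    D.lenW (wD * w⁻¹ * D.sRef α hα * w) =
        D.lenW wD - D.lenW (D.sRef (dualAct w⁻¹ α) (D.pos_subset hpos)) ∧
      D.lenW (wD * w⁻¹ * D.sRef α hα) + D.lenW w = D.lenW wD - 1 ∧
      D.lenW (wD * w⁻¹ * D.sRef α hα * w) <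
        D.lenW (wD * w⁻¹ * D.sRef α hα) + D.lenW w := by
  classical
  have hβ₀r : dualAct w⁻¹ α ∈ D.roots := D.pos_subset hpos
  have hsmem : D.sRef α hα ∈ D.weylGroup := D.sRef_mem α hα
  have hx : w⁻¹ * D.sRef α hα * w ∈ D.weylGroup :=
    mul_mem (mul_mem (inv_mem hw) hsmem) hw
  have hy : w⁻¹ * D.sRef α hα ∈ D.weylGroup := mul_mem (inv_mem hw) hsmem
  have hwDlen : D.lenW wD = D.pos.card := D.lenW_long hwDlong
  have hform : ∀ γ : Module.Dual ℝ V, dualAct (w⁻¹ * D.sRef α hα * w) γ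
      = γ - γ (w.symm (D.coroot α)) • (dualAct w⁻¹ α) := by
    intro γ
    rw [dualAct_mul, dualAct_mul, D.dualAct_sRef, dualAct_sub, dualAct_smul,
      dualAct_inv_apply]
    rfl
  have hc2' : (dualAct w⁻¹ α) (w.symm (D.coroot α)) = 2 := by
    have hval : (dualAct w⁻¹ α) (w.symm (D.coroot α)) = α ((w⁻¹).symm (w.symm (D.coroot α))) := rfl
    rw [hval]
    have hww : (w⁻¹).symm = w := rfl
    rw [hww, LinearEquiv.apply_symm_apply]
    exact D.coroot_self α hα
  have hvals : ∀ γ ∈ D.roots, γ (D.coroot (dualAct w⁻¹ α)) = γ (w.symm (D.coroot α)) := by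
    apply D.coroot_values_eq hβ₀r
    · exact D.coroot_self _ hβ₀r
    · exact hc2'
    · exact D.reflection_mem _ hβ₀r
    · intro γ hγ
      rw [← hform γ]
      exact D.root_mapsto hx γ hγ
  have hconj : D.lenW (w⁻¹ * D.sRef α hα * w)
      = D.lenW (D.sRef (dualAct w⁻¹ α) (D.pos_subset hpos)) := by
    apply D.lenW_congr
    intro β hβ
    rw [hform β, D.dualAct_sRef, hvals β (D.pos_subset hβ)]
  have h1 : D.lenW (wD * w⁻¹ * D.sRef α hα * w) =
      D.lenW wD - D.lenW (D.sRef (dualAct w⁻¹ α) (D.pos_subset hpos)) := by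
    have hassoc : wD * w⁻¹ * D.sRef α hα * w = wD * (w⁻¹ * D.sRef α hα * w) := by
      group
    rw [hassoc, D.lenW_long_mul hwD hwDlong hx, hconj, hwDlen]
  have hlen2 : D.lenW (w⁻¹ * D.sRef α hα) = D.lenW w + 1 := by
    have hinv : (w⁻¹ * D.sRef α hα)⁻¹ = D.sRef α hα * w := by
      rw [mul_inv_rev, inv_inv, D.sRef_inv]
    have hli := D.lenW_inv hy
    rw [hinv] at hli
    rw [← hli, D.lenW_simple_mul hα hαs hw hpos]
  have h2 : D.lenW (wD * w⁻¹ * D.sRef α hα) + D.lenW w = D.lenW wD - 1 := by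
    have hassoc2 : wD * w⁻¹ * D.sRef α hα = wD * (w⁻¹ * D.sRef α hα) := by group
    rw [hassoc2, D.lenW_long_mul hwD hwDlong hy, hlen2, hwDlen]
    have hle : D.lenW w + 1 ≤ D.pos.card := by
      rw [← hlen2]
      exact D.lenW_le_card _
    omega
  refine ⟨h1, h2, ?_⟩
  have hge2 : 2 ≤ D.lenW (D.sRef (dualAct w⁻¹ α) (D.pos_subset hpos)) :=
    D.two_le_lenW_sRef hpos (D.pos_subset hpos) hns
  have hle2 : D.lenW (D.sRef (dualAct w⁻¹ α) (D.pos_subset hpos)) ≤ D.pos.card :=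
    D.lenW_le_card _
  rw [h1, h2, hwDlen]
  omega
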